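/- Let C be a nonempty closed convex subset of a real Hilbert space X, R : X → X a linear isometry, S = R − Id, and z ∈ C. Then z = P_C(Rz) if and only if σ_C(Sz) + (1/2)‖Sz‖² = 0, where σ_C is the support function of C and P_C is the metric projection onto C. -/

import Mathlib

open RealInnerProductSpace

/-- For a nonempty closed convex `C`, a linear isometry `R`, `S = R - Id`, and `z ∈ C`:
`z = P_C (Rz)` if and only if `σ_C(Sz) + ½‖Sz‖² = 0`. -/
theorem stmt18 {X : Type*} [NormedAddCommGroup X] [InnerProductSpace ℝ X] [CompleteSpace X]
    (C : Set X) (hne : C.Nonempty) (hcl : IsClosed C) (hconv : Convex ℝ C)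
    (R : X →L[ℝ] X) (hiso : ∀ x : X, ‖R x‖ = ‖x‖) (z : X) (hz : z ∈ C) :
    (∀ y ∈ C, ‖z - R z‖ ≤ ‖y - R z‖) ↔
    (⨆ c ∈ C, ((⟪c, R z - z⟫ : ℝ) : EReal)) + ((1 / 2 * ‖R z - z‖ ^ 2 : ℝ) : EReal) = 0 := by
  set a : ℝ := ⟪z, R z - z⟫ with ha
  have hkey : 1 / 2 * ‖R z - z‖ ^ 2 = -a := by
    have h1 : ‖R z - z‖ ^ 2 = ‖R z‖ ^ 2 - 2 * ⟪R z, z⟫ + ‖z‖ ^ 2 := by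
      rw [@norm_sub_sq_real]
    have h2 : a = ⟪z, R z⟫ - ‖z‖ ^ 2 := by
      rw [ha, inner_sub_right, real_inner_self_eq_norm_sq]
    have h3 : ⟪R z, z⟫ = ⟪z, R z⟫ := real_inner_comm _ _
    have h4 : ‖R z‖ = ‖z‖ := hiso z
    rw [h1, h3, h4, h2]; ring
  -- the variational inequality
  have hvar : (∀ y ∈ C, ‖z - R z‖ ≤ ‖y - R z‖) ↔ ∀ c ∈ C, ⟪c, R z - z⟫ ≤ a := by
    constructor
    · intro h
      have hinf : ‖R z - z‖ = ⨅ w : C, ‖R z - w‖ := by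
        haveI : Nonempty C := ⟨⟨z, hz⟩⟩
        apply le_antisymm
        · apply le_ciInf
          intro w
          rw [norm_sub_rev, norm_sub_rev (R z) (w : X)]
          exact h w w.2
        · exact ciInf_le ⟨0, fun x ⟨w, hw⟩ => hw ▸ norm_nonneg _⟩ (⟨z, hz⟩ : C)
      have hle := (norm_eq_iInf_iff_real_inner_le_zero hconv hz).mp hinf
      intro c hc
      have h5 := hle c hc
      have h6 : ⟪R z - z, c - z⟫ = ⟪c, R z - z⟫ - a := by
        rw [real_inner_comm, inner_sub_left, ha]
      rw [h6] at h5
      linarith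
    · intro h y hy
      have h5 : ⟪R z - z, y - z⟫ ≤ 0 := by
        have := h y hy
        rw [real_inner_comm, inner_sub_left]
        linarith
      have hexp : ‖y - R z‖ ^ 2 = ‖y - z‖ ^ 2 - 2 * ⟪y - z, R z - z⟫ + ‖R z - z‖ ^ 2 := by
        have he : y - R z = (y - z) - (R z - z) := by abel
        rw [he, @norm_sub_sq_real]
      have h7 : ‖z - R z‖ ^ 2 ≤ ‖y - R z‖ ^ 2 := by
        rw [norm_sub_rev z (R z), hexp]
        have h8 : ⟪y - z, R z - z⟫ = ⟪R z - z, y - z⟫ := real_inner_comm _ _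
        nlinarith [sq_nonneg ‖y - z‖]
      nlinarith [norm_nonneg (z - R z), norm_nonneg (y - R z)]
  rw [hvar, hkey]
  constructor
  · intro h
    have hsup : (⨆ c ∈ C, ((⟪c, R z - z⟫ : ℝ) : EReal)) = (a : EReal) := by
      apply le_antisymm
      · exact iSup₂_le fun c hc => EReal.coe_le_coe_iff.mpr (h c hc)
      · exact le_iSup₂_of_le z hz (le_refl _)
    rw [hsup, ← EReal.coe_add]
    norm_num
  · intro h c hc
    have h1 : ((⟪c, R z - z⟫ : ℝ) : EReal) ≤ ⨆ c ∈ C, ((⟪c, R z - z⟫ : ℝ) : EReal) :=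
      le_iSup₂_of_le c hc (le_refl _)
    have h2 : ((⟪c, R z - z⟫ : ℝ) : EReal) + ((-a : ℝ) : EReal) ≤
        (⨆ c ∈ C, ((⟪c, R z - z⟫ : ℝ) : EReal)) + ((-a : ℝ) : EReal) :=
      add_le_add_left h1 _
    rw [h, ← EReal.coe_add] at h2
    have : (⟪c, R z - z⟫ : ℝ) + (-a) ≤ 0 := by exact_mod_cast h2
    linarith
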